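/- Under a translation-invariant product measure ℙ_u on hyper-edge configurations satisfying the irreducibility condition, if the number of infinite open clusters is almost surely a finite constant k ≥ 1, then k = 1. -/

import Mathlib

open MeasureTheory

/-- Hyper-edges on `ℤ^d`: finite subsets of vertices. -/
abbrev HEdge (d : ℕ) := Finset (Fin d → ℤ)

/-- Configurations of Bernoulli hyper-edge percolation. -/
abbrev Cfg (d : ℕ) := HEdge d → Bool

/-- Connectivity via chains of hyper-edges from `G`, augmented with the diagonal. -/
def connRel {d : ℕ} (G : Set (HEdge d)) (x y : Fin d → ℤ) : Prop :=
  x = y ∨ ∃ n : ℕ, ∃ hs : Fin (n + 1) → HEdge d,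
    (∀ i, hs i ∈ G) ∧ x ∈ hs 0 ∧ y ∈ hs (Fin.last n) ∧
    ∀ i : Fin n, ((hs i.castSucc : HEdge d) ∩ hs i.succ).Nonempty

/-- Open hyper-edges of a configuration. -/
def openEdges {d : ℕ} (ω : Cfg d) : Set (HEdge d) := {h | ω h = true}

/-- The open cluster of the vertex `x`. -/
def cluster {d : ℕ} (ω : Cfg d) (x : Fin d → ℤ) : Set (Fin d → ℤ) :=
  {y | connRel (openEdges ω) x y}

/-- The collection of infinite open clusters. -/
def infClusters {d : ℕ} (ω : Cfg d) : Set (Set (Fin d → ℤ)) :=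
  {C | ∃ x, C = cluster ω x ∧ C.Infinite}

namespace Stmt13

variable {d : ℕ}

def stepR (G : Set (HEdge d)) (a b : Fin d → ℤ) : Prop := ∃ h ∈ G, a ∈ h ∧ b ∈ h

lemma stepR_symm {G : Set (HEdge d)} : Symmetric (stepR G) := by
  rintro a b ⟨h, hG, ha, hb⟩; exact ⟨h, hG, hb, ha⟩

lemma chain_to_rtg {G : Set (HEdge d)} :
    ∀ (n : ℕ) (hs : Fin (n + 1) → HEdge d), (∀ i, hs i ∈ G) →
    ∀ x y : Fin d → ℤ, x ∈ hs 0 → y ∈ hs (Fin.last n) →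
    (∀ i : Fin n, ((hs i.castSucc : HEdge d) ∩ hs i.succ).Nonempty) →
    Relation.ReflTransGen (stepR G) x y := by
  intro n
  induction n with
  | zero =>
    intro hs hG x y hx hy _
    exact Relation.ReflTransGen.single ⟨hs 0, hG 0, hx, hy⟩
  | succ n ih =>
    intro hs hG x y hx hy hint
    obtain ⟨v, hv⟩ := hint (Fin.last n)
    rw [Finset.mem_inter] at hv
    have h1 : Relation.ReflTransGen (stepR G) x v := by
      refine ih (fun i => hs i.castSucc) (fun i => hG _) x v ?_ hv.1 ?_
      · simpa using hx
      · intro i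
        have := hint i.castSucc
        simp only [Fin.succ_castSucc] at this ⊢; exact this
    refine h1.tail ⟨hs (Fin.last (n+1)), hG _, ?_, ?_⟩
    · simpa [Fin.succ_last] using hv.2
    · exact hy

lemma connRel_iff_rtg {G : Set (HEdge d)} {x y : Fin d → ℤ} :
    connRel G x y ↔ Relation.ReflTransGen (stepR G) x y := by
  constructor
  · rintro (rfl | ⟨n, hs, hG, hx, hy, hint⟩)
    · exact Relation.ReflTransGen.refl
    · exact chain_to_rtg n hs hG x y hx hy hint
  · intro h
    induction h with
    | refl => exact Or.inl rfl
    | @tail b c hab hstep ih =>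
      obtain ⟨h, hG, hb, hc⟩ := hstep
      rcases ih with rfl | ⟨n, hs, hsG, hx, hyb, hint⟩
      · exact Or.inr ⟨0, fun _ => h, fun _ => hG, hb, hc, fun i => i.elim0⟩
      · refine Or.inr ⟨n + 1, Fin.snoc hs h, ?_, ?_, ?_, ?_⟩
        · intro i
          refine Fin.lastCases ?_ ?_ i
          · simpa using hG
          · intro j; simpa using hsG j
        · have : (0 : Fin (n + 2)) = (0 : Fin (n+1)).castSucc := by simp
          rw [this, Fin.snoc_castSucc]; exact hx
        · simpa using hc
        · intro i
          refine Fin.lastCases ?_ ?_ i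
          · rw [Fin.snoc_castSucc, Fin.succ_last, Fin.snoc_last]
            exact ⟨b, Finset.mem_inter.2 ⟨hyb, hb⟩⟩
          · intro j
            rw [Fin.snoc_castSucc, Fin.succ_castSucc, Fin.snoc_castSucc]
            exact hint j

lemma connRel_refl (G : Set (HEdge d)) (x : Fin d → ℤ) : connRel G x x := Or.inl rfl

lemma connRel_symm {G : Set (HEdge d)} {x y : Fin d → ℤ} (h : connRel G x y) : connRel G y x := by
  rw [connRel_iff_rtg] at h ⊢
  haveI : Std.Symm (stepR G) := ⟨fun a b hab => stepR_symm hab⟩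
  exact Std.Symm.symm _ _ h

lemma connRel_trans {G : Set (HEdge d)} {x y z : Fin d → ℤ}
    (h1 : connRel G x y) (h2 : connRel G y z) : connRel G x z := by
  rw [connRel_iff_rtg] at h1 h2 ⊢
  exact h1.trans h2

lemma connRel_mono {G G' : Set (HEdge d)} (hGG : G ⊆ G') {x y : Fin d → ℤ}
    (h : connRel G x y) : connRel G' x y := by
  rw [connRel_iff_rtg] at h ⊢
  exact Relation.ReflTransGen.mono (fun a b ⟨h, hG, ha, hb⟩ => ⟨h, hGG hG, ha, hb⟩) _ _ h

lemma mem_cluster_self (ω : Cfg d) (x : Fin d → ℤ) : x ∈ cluster ω x := connRel_refl _ _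

lemma cluster_eq_of_mem {ω : Cfg d} {x y : Fin d → ℤ} (h : y ∈ cluster ω x) :
    cluster ω y = cluster ω x := by
  ext z
  exact ⟨fun hz => connRel_trans h hz, fun hz => connRel_trans (connRel_symm h) hz⟩


noncomputable section

/-- Force the hyper-edges in `S` open. -/
def forceOpen (S : Finset (HEdge d)) (ω : Cfg d) : Cfg d :=
  fun h => if h ∈ S then true else ω h

lemma openEdges_forceOpen (S : Finset (HEdge d)) (ω : Cfg d) :
    openEdges (forceOpen S ω) = ↑S ∪ openEdges ω := by
  ext h
  simp only [openEdges, forceOpen, Set.mem_setOf_eq, Set.mem_union, Finset.coe_sort_coe,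
    Finset.mem_coe]
  split_ifs with h' <;> simp [h']

lemma cluster_subset_forceOpen (S : Finset (HEdge d)) (ω : Cfg d) (x : Fin d → ℤ) :
    cluster ω x ⊆ cluster (forceOpen S ω) x := by
  intro y hy
  exact connRel_mono (by rw [openEdges_forceOpen]; exact Set.subset_union_right) hy

/-- vertices touched by `S` -/
def vertsOf (S : Finset (HEdge d)) : Finset (Fin d → ℤ) := S.biUnion id

lemma cluster_forceOpen_subset (S : Finset (HEdge d)) (ω : Cfg d) (z : Fin d → ℤ) :
    cluster (forceOpen S ω) z ⊆ cluster ω z ∪ ⋃ v ∈ vertsOf S, cluster ω v := by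
  intro t ht
  have h : Relation.ReflTransGen (stepR (↑S ∪ openEdges ω)) z t := by
    have := (connRel_iff_rtg).1 ht
    rwa [openEdges_forceOpen] at this
  clear ht
  induction h with
  | refl => exact Or.inl (mem_cluster_self ω z)
  | @tail b c hzb hstep ih =>
    obtain ⟨h, hG, hb, hc⟩ := hstep
    rcases hG with hS | hopen
    · refine Or.inr ?_
      refine Set.mem_biUnion ?_ (mem_cluster_self ω c)
      exact Finset.mem_biUnion.2 ⟨h, hS, hc⟩
    · have hbc : connRel (openEdges ω) b c :=
        Or.inr ⟨0, fun _ => h, fun _ => hopen, hb, hc, fun i => i.elim0⟩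
      rcases ih with hb' | hb'
      · exact Or.inl (connRel_trans hb' hbc)
      · obtain ⟨v, hv, hbv⟩ := Set.mem_iUnion₂.1 hb'
        exact Or.inr (Set.mem_biUnion hv (connRel_trans hbv hbc))

lemma exists_infinite_subcluster {S : Finset (HEdge d)} {ω : Cfg d} {z : Fin d → ℤ}
    (hinf : (cluster (forceOpen S ω) z).Infinite) :
    ∃ w ∈ cluster (forceOpen S ω) z, (cluster ω w).Infinite := by
  by_contra hcon
  push_neg at hcon
  have hfin : ∀ w ∈ cluster (forceOpen S ω) z, (cluster ω w).Finite := by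
    intro w hw
    have := hcon w hw
    exact this
  apply hinf
  have hsub : cluster (forceOpen S ω) z ⊆
      (cluster (forceOpen S ω) z ∩ cluster ω z) ∪
        ⋃ v ∈ (vertsOf S : Finset _), (cluster (forceOpen S ω) z ∩ cluster ω v) := by
    intro t ht
    rcases cluster_forceOpen_subset S ω z ht with h | h
    · exact Or.inl ⟨ht, h⟩
    · obtain ⟨v, hv, htv⟩ := Set.mem_iUnion₂.1 h
      exact Or.inr (Set.mem_biUnion hv ⟨ht, htv⟩)
  refine Set.Finite.subset ?_ hsub
  refine Set.Finite.union ?_ ?_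
  · exact Set.Finite.subset (hfin z (mem_cluster_self _ z)) Set.inter_subset_right
  · refine Set.Finite.biUnion (Finset.finite_toSet _) ?_
    intro v _
    rcases Set.eq_empty_or_nonempty (cluster (forceOpen S ω) z ∩ cluster ω v) with he | ⟨w, hw1, hw2⟩
    · rw [he]; exact Set.finite_empty
    · have : cluster ω v = cluster ω w := (cluster_eq_of_mem hw2).symm
      refine Set.Finite.subset (hfin w hw1) ?_
      rw [← this]
      exact Set.inter_subset_right

open Classical in
/-- representative of a set -/
def rep (C : Set (Fin d → ℤ)) : Fin d → ℤ :=
  if h : C.Nonempty then h.some else fun _ => 0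

lemma rep_mem {C : Set (Fin d → ℤ)} (h : C.Nonempty) : rep C ∈ C := by
  rw [rep, dif_pos h]
  exact h.some_mem

/-- Main combinatorial merging lemma. -/
lemma merge_lemma (ω : Cfg d) (S : Finset (HEdge d)) (x y : Fin d → ℤ)
    (hxy : connRel (↑S : Set (HEdge d)) x y)
    (hx : (cluster ω x).Infinite) (hy : (cluster ω y).Infinite)
    (hne : cluster ω x ≠ cluster ω y) (hfin : (infClusters ω).Finite) :
    (infClusters (forceOpen S ω)).Finite ∧
      (infClusters (forceOpen S ω)).ncard + 1 ≤ (infClusters ω).ncard := by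
  set T := forceOpen S ω with hT
  -- clusters are nonempty, rep lies inside, cluster of rep recovers the cluster
  have hrep : ∀ C ∈ infClusters ω, cluster ω (rep C) = C := by
    rintro C ⟨x₀, rfl, hCinf⟩
    exact cluster_eq_of_mem (rep_mem ⟨x₀, mem_cluster_self ω x₀⟩)
  set g : Set (Fin d → ℤ) → Set (Fin d → ℤ) := fun C => cluster T (rep C) with hg
  have hmapsto : ∀ C ∈ infClusters ω, g C ∈ infClusters T := by
    intro C hC
    refine ⟨rep C, rfl, ?_⟩
    refine Set.Infinite.mono (cluster_subset_forceOpen S ω (rep C)) ?_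
    rw [hrep C hC]
    obtain ⟨x₀, rfl, hCinf⟩ := hC
    exact hCinf
  have hsurj : ∀ D ∈ infClusters T, ∃ C ∈ infClusters ω, g C = D := by
    rintro D ⟨z, rfl, hDinf⟩
    obtain ⟨w, hwz, hwinf⟩ := exists_infinite_subcluster hDinf
    refine ⟨cluster ω w, ⟨w, rfl, hwinf⟩, ?_⟩
    have h1 : rep (cluster ω w) ∈ cluster ω w := rep_mem ⟨w, mem_cluster_self ω w⟩
    have h2 : rep (cluster ω w) ∈ cluster T z := by
      have : cluster ω w ⊆ cluster T w := cluster_subset_forceOpen S ω w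
      have hTw : cluster T w = cluster T z := cluster_eq_of_mem hwz
      rw [← hTw]; exact this h1
    exact cluster_eq_of_mem h2
  -- x and y are identified
  have hCx : cluster ω x ∈ infClusters ω := ⟨x, rfl, hx⟩
  have hCy : cluster ω y ∈ infClusters ω := ⟨y, rfl, hy⟩
  have hTxy : cluster T y = cluster T x := by
    refine cluster_eq_of_mem ?_
    refine connRel_mono ?_ hxy
    rw [hT, openEdges_forceOpen]
    exact Set.subset_union_left
  have hgx : g (cluster ω x) = cluster T x := by
    have h1 : rep (cluster ω x) ∈ cluster T x :=
      cluster_subset_forceOpen S ω x (rep_mem ⟨x, mem_cluster_self ω x⟩)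
    exact cluster_eq_of_mem h1
  have hgy : g (cluster ω y) = cluster T x := by
    have h1 : rep (cluster ω y) ∈ cluster T y :=
      cluster_subset_forceOpen S ω y (rep_mem ⟨y, mem_cluster_self ω y⟩)
    rw [hg]
    simp only []
    rw [cluster_eq_of_mem (hTxy ▸ h1)]
  have hsub : infClusters T ⊆ g '' (infClusters ω \ {cluster ω y}) := by
    intro D hD
    obtain ⟨C, hC, hgC⟩ := hsurj D hD
    by_cases hCy' : C = cluster ω y
    · refine ⟨cluster ω x, ⟨hCx, ?_⟩, ?_⟩
      · simpa using hne
      · rw [hgx, ← hgC, hCy', hgy]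
    · exact ⟨C, ⟨hC, by simpa using hCy'⟩, hgC⟩
  have hfin2 : (infClusters T).Finite :=
    Set.Finite.subset (hfin.diff.image g) hsub
  refine ⟨hfin2, ?_⟩
  have h1 : (infClusters T).ncard ≤ (g '' (infClusters ω \ {cluster ω y})).ncard :=
    Set.ncard_le_ncard hsub (hfin.diff.image g)
  have h2 : (g '' (infClusters ω \ {cluster ω y})).ncard ≤ (infClusters ω \ {cluster ω y}).ncard :=
    Set.ncard_image_le hfin.diff
  have h3 : (infClusters ω \ {cluster ω y}).ncard = (infClusters ω).ncard - 1 :=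
    Set.ncard_diff_singleton_of_mem hCy
  have h4 : 1 ≤ (infClusters ω).ncard := by
    rw [Nat.one_le_iff_ne_zero]
    intro h0
    have := (Set.ncard_eq_zero hfin).1 h0
    rw [this] at hCy
    exact hCy
  omega


/-- At least `m` distinct infinite clusters, via representatives. -/
def Ek (d : ℕ) (m : ℕ) : Set (Cfg d) :=
  {ω | ∃ p : Fin m → (Fin d → ℤ), (∀ i, (cluster ω (p i)).Infinite) ∧
    Function.Injective fun i => cluster ω (p i)}

lemma mem_Ek_of_ncard {ω : Cfg d} {m : ℕ} (hfin : (infClusters ω).Finite)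
    (hcard : m ≤ (infClusters ω).ncard) : ω ∈ Ek d m := by
  obtain ⟨t, hts, htm⟩ := Set.exists_subset_card_eq hcard
  have htfin : t.Finite := hfin.subset hts
  have hrepC : ∀ C ∈ t, cluster ω (rep C) = C := by
    intro C hC
    obtain ⟨x₀, rfl, hCinf⟩ := hts hC
    exact cluster_eq_of_mem (rep_mem ⟨x₀, mem_cluster_self ω x₀⟩)
  have hFcard : htfin.toFinset.card = m := by
    rw [← Set.ncard_eq_toFinset_card t htfin]; exact htm
  have e2 : {x // x ∈ htfin.toFinset} ≃ Fin m :=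
    (htfin.toFinset.equivFin).trans (finCongr hFcard)
  have hmem : ∀ l : Fin m, ((e2.symm l : {x // x ∈ htfin.toFinset}) : Set (Fin d → ℤ)) ∈ t :=
    fun l => (htfin.mem_toFinset).1 (e2.symm l).2
  refine ⟨fun i => rep ((e2.symm i : {x // x ∈ htfin.toFinset}) : Set (Fin d → ℤ)), ?_, ?_⟩
  · intro i
    rw [hrepC _ (hmem i)]
    obtain ⟨x₀, hx₀, hCinf⟩ := hts (hmem i)
    exact hCinf
  · intro i j hij
    simp only [] at hij
    rw [hrepC _ (hmem i), hrepC _ (hmem j)] at hij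
    exact e2.symm.injective (Subtype.ext hij)

lemma ncard_le_of_mem_Ek {ω : Cfg d} {m : ℕ} (h : ω ∈ Ek d m)
    (hfin : (infClusters ω).Finite) : m ≤ (infClusters ω).ncard := by
  obtain ⟨p, hpinf, hpinj⟩ := h
  have hsub : Set.range (fun i => cluster ω (p i)) ⊆ infClusters ω := by
    rintro C ⟨i, rfl⟩
    exact ⟨p i, rfl, hpinf i⟩
  classical
  have hcard : (Set.range fun i => cluster ω (p i)).ncard = m := by
    rw [← Set.image_univ, ← Finset.coe_univ, ← Finset.coe_image, Set.ncard_coe_finset,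
      Finset.card_image_of_injective _ hpinj, Finset.card_univ, Fintype.card_fin]
  rw [← hcard]
  exact Set.ncard_le_ncard hsub hfin

-- Measurability
instance : Countable (HEdge d) := inferInstance

lemma measurableSet_mem_cluster (x y : Fin d → ℤ) :
    MeasurableSet {ω : Cfg d | y ∈ cluster ω x} := by
  have heq : {ω : Cfg d | y ∈ cluster ω x} =
      {ω : Cfg d | x = y} ∪ ⋃ (n : ℕ), ⋃ (hs : Fin (n + 1) → HEdge d),
        ⋃ (_ : x ∈ hs 0 ∧ y ∈ hs (Fin.last n) ∧
          ∀ i : Fin n, ((hs i.castSucc : HEdge d) ∩ hs i.succ).Nonempty),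
          ⋂ (i : Fin (n + 1)), {ω : Cfg d | ω (hs i) = true} := by
    ext ω
    simp only [Set.mem_setOf_eq, Set.mem_union, Set.mem_iUnion, Set.mem_iInter]
    constructor
    · rintro (rfl | ⟨n, hs, hG, hx, hy, hint⟩)
      · exact Or.inl rfl
      · exact Or.inr ⟨n, hs, ⟨hx, hy, hint⟩, hG⟩
    · rintro (rfl | ⟨n, hs, ⟨hx, hy, hint⟩, hG⟩)
      · exact Or.inl rfl
      · exact Or.inr ⟨n, hs, hG, hx, hy, hint⟩
  rw [heq]
  refine MeasurableSet.union ?_ ?_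
  · by_cases hxy : x = y
    · simp [hxy]
    · simp [hxy]
  · refine MeasurableSet.iUnion fun n => MeasurableSet.iUnion fun hs =>
      MeasurableSet.iUnion fun _ => MeasurableSet.iInter fun i => ?_
    have hpre : {ω : Cfg d | ω (hs i) = true} = (fun ω : Cfg d => ω (hs i)) ⁻¹' {true} := rfl
    rw [hpre]
    exact (measurable_pi_apply (hs i)) (measurableSet_singleton true)

lemma measurableSet_cluster_infinite (x : Fin d → ℤ) :
    MeasurableSet {ω : Cfg d | (cluster ω x).Infinite} := by
  have heq : {ω : Cfg d | (cluster ω x).Infinite} =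
      ⋂ (F : Finset (Fin d → ℤ)), ⋃ (y : Fin d → ℤ), ⋃ (_ : y ∉ F),
        {ω : Cfg d | y ∈ cluster ω x} := by
    ext ω
    simp only [Set.mem_setOf_eq, Set.mem_iInter, Set.mem_iUnion]
    constructor
    · intro hinf F
      obtain ⟨a, ha, haF⟩ := hinf.exists_notMem_finset F
      exact ⟨a, haF, ha⟩
    · intro h
      by_contra hf
      rw [Set.not_infinite] at hf
      obtain ⟨a, haF, ha⟩ := h hf.toFinset
      exact haF (hf.mem_toFinset.2 ha)
  rw [heq]
  exact MeasurableSet.iInter fun F => MeasurableSet.iUnion fun y =>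
    MeasurableSet.iUnion fun _ => measurableSet_mem_cluster x y

lemma measurableSet_cluster_eq (x y : Fin d → ℤ) :
    MeasurableSet {ω : Cfg d | cluster ω x = cluster ω y} := by
  have heq : {ω : Cfg d | cluster ω x = cluster ω y} =
      ⋂ (z : Fin d → ℤ),
        (({ω : Cfg d | z ∈ cluster ω x} ∩ {ω | z ∈ cluster ω y}) ∪
         ({ω : Cfg d | z ∈ cluster ω x}ᶜ ∩ {ω | z ∈ cluster ω y}ᶜ)) := by
    ext ω
    simp only [Set.mem_setOf_eq, Set.mem_iInter, Set.mem_union, Set.mem_inter_iff,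
      Set.mem_compl_iff]
    constructor
    · intro h z
      by_cases hz : z ∈ cluster ω x
      · exact Or.inl ⟨hz, h ▸ hz⟩
      · exact Or.inr ⟨hz, fun hc => hz (h ▸ hc)⟩
    · intro h
      ext z
      rcases h z with ⟨h1, h2⟩ | ⟨h1, h2⟩
      · exact ⟨fun _ => h2, fun _ => h1⟩
      · exact ⟨fun hc => absurd hc h1, fun hc => absurd hc h2⟩
  rw [heq]
  exact MeasurableSet.iInter fun z =>
    ((measurableSet_mem_cluster x z).inter (measurableSet_mem_cluster y z)).union
      ((measurableSet_mem_cluster x z).compl.inter (measurableSet_mem_cluster y z).compl)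

lemma measurableSet_Ek (m : ℕ) : MeasurableSet (Ek d m) := by
  have heq : Ek d m = ⋃ (p : Fin m → (Fin d → ℤ)),
      ((⋂ i, {ω : Cfg d | (cluster ω (p i)).Infinite}) ∩
       (⋂ (i : Fin m), ⋂ (j : Fin m),
         {ω : Cfg d | cluster ω (p i) = cluster ω (p j) → i = j})) := by
    ext ω
    simp only [Ek, Set.mem_setOf_eq, Set.mem_iUnion, Set.mem_inter_iff, Set.mem_iInter]
    constructor
    · rintro ⟨p, h1, h2⟩
      exact ⟨p, h1, fun i j hij => h2 hij⟩
    · rintro ⟨p, h1, h2⟩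
      exact ⟨p, h1, fun i j hij => h2 i j hij⟩
  rw [heq]
  refine MeasurableSet.iUnion fun p => MeasurableSet.inter ?_ ?_
  · exact MeasurableSet.iInter fun i => measurableSet_cluster_infinite (p i)
  · refine MeasurableSet.iInter fun i => MeasurableSet.iInter fun j => ?_
    by_cases hij : i = j
    · have : {ω : Cfg d | cluster ω (p i) = cluster ω (p j) → i = j} = Set.univ := by
        ext ω; simp [hij]
      rw [this]; exact MeasurableSet.univ
    · have : {ω : Cfg d | cluster ω (p i) = cluster ω (p j) → i = j} =
        {ω : Cfg d | cluster ω (p i) = cluster ω (p j)}ᶜ := by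
        ext ω; simp [hij]
      rw [this]
      exact (measurableSet_cluster_eq (p i) (p j)).compl

end

-- Cylinder events
def cylE (F : Finset (HEdge d)) (c : HEdge d → Bool) : Set (Cfg d) := {ω | ∀ h ∈ F, ω h = c h}

lemma measurableSet_cylE (F : Finset (HEdge d)) (c : HEdge d → Bool) :
    MeasurableSet (cylE F c) := by
  have : cylE F c = ⋂ h ∈ (F : Set (HEdge d)), {ω : Cfg d | ω h = c h} := by
    ext ω; simp [cylE]
  rw [this]
  refine MeasurableSet.biInter (F.countable_toSet) fun h _ => ?_
  have hpre : {ω : Cfg d | ω h = c h} = (fun ω : Cfg d => ω h) ⁻¹' {c h} := rfl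
  rw [hpre]
  exact (measurable_pi_apply h) (measurableSet_singleton _)

def offCyls (S : Finset (HEdge d)) : Set (Set (Cfg d)) :=
  {t | ∃ F : Finset (HEdge d), ∃ c : HEdge d → Bool, Disjoint F S ∧ t = cylE F c}

lemma isPiSystem_offCyls (S : Finset (HEdge d)) : IsPiSystem (offCyls S) := by
  classical
  rintro t1 ⟨F1, c1, hd1, rfl⟩ t2 ⟨F2, c2, hd2, rfl⟩ hne
  obtain ⟨ω₀, hω1, hω2⟩ := hne
  refine ⟨F1 ∪ F2, fun h => if h ∈ F1 then c1 h else c2 h, ?_, ?_⟩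
  · exact Finset.disjoint_union_left.2 ⟨hd1, hd2⟩
  · ext ω
    simp only [cylE, Set.mem_inter_iff, Set.mem_setOf_eq, Finset.mem_union]
    constructor
    · rintro ⟨h1, h2⟩ h hh
      by_cases hF1 : h ∈ F1
      · rw [if_pos hF1]; exact h1 h hF1
      · rw [if_neg hF1]; exact h2 h (hh.resolve_left hF1)
    · intro hall
      constructor
      · intro h hh
        have := hall h (Or.inl hh)
        rwa [if_pos hh] at this
      · intro h hh
        have := hall h (Or.inr hh)
        by_cases hF1 : h ∈ F1
        · rw [if_pos hF1] at this
          rw [this, ← hω1 h hF1, hω2 h hh]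
        · rwa [if_neg hF1] at this

/-- Measurability of the force-open map w.r.t. the σ-algebra of coordinates off `S`. -/
lemma measurable_forceOpen_offCyls (S : Finset (HEdge d)) :
    @Measurable (Cfg d) (Cfg d) (MeasurableSpace.generateFrom (offCyls S)) _ (forceOpen S) := by
  letI m1 : MeasurableSpace (Cfg d) := MeasurableSpace.generateFrom (offCyls S)
  rw [measurable_pi_iff]
  intro h
  by_cases hS : h ∈ S
  · have : (fun ω : Cfg d => forceOpen S ω h) = fun _ => true := by
      funext ω; simp [forceOpen, hS]
    rw [this]
    exact @measurable_const _ _ _ m1 _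
  · have heq : (fun ω : Cfg d => forceOpen S ω h) = fun ω : Cfg d => ω h := by
      funext ω; simp [forceOpen, hS]
    rw [heq]
    refine measurable_to_countable fun ω₀ => ?_
    refine MeasurableSpace.measurableSet_generateFrom ?_
    refine ⟨{h}, fun _ => ω₀ h, by simpa using hS, ?_⟩
    ext ω; simp [cylE]


end Stmt13

open Stmt13

/-- for the translation-invariant product measure (each hyper-edge `h`
open independently with probability `1-(1-u)^{μ({h})}`) with `μ` irreducible, if the
number of infinite open clusters is a.s. equal to a finite constant `k ≥ 1`, then
`k = 1`. -/
theorem stmt_13 {d : ℕ} (μ : HEdge d → ℝ) (hμ : ∀ h, 0 ≤ μ h)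
    (u : ℝ) (hu : 0 < u) (hu1 : u < 1)
    (hTI : ∀ (v : Fin d → ℤ) (h : HEdge d), μ (h.image (v + ·)) = μ h)
    (hirr : ∀ x y : Fin d → ℤ, connRel {h : HEdge d | 0 < μ h} x y)
    (P : Measure (Cfg d)) [IsProbabilityMeasure P]
    (hprod : ∀ (F : Finset (HEdge d)) (c : HEdge d → Bool),
      P {ω | ∀ h ∈ F, ω h = c h} =
        ∏ h ∈ F, ENNReal.ofReal (if c h then 1 - (1 - u) ^ (μ h) else (1 - u) ^ (μ h)))
    (k : ℕ) (hk : 1 ≤ k)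
    (hconst : P {ω | (infClusters ω).Finite ∧ (infClusters ω).ncard = k} = 1) :
    k = 1 := by
  by_contra hk1
  have hk2 : 2 ≤ k := by omega
  classical
  set A : Set (Cfg d) := {ω | (infClusters ω).Finite ∧ (infClusters ω).ncard = k} with hA
  have hAE : A ⊆ Ek d k := fun ω hω => mem_Ek_of_ncard hω.1 (le_of_eq hω.2.symm)
  have hPEk : P (Ek d k) = 1 :=
    le_antisymm prob_le_one (by rw [← hconst]; exact measure_mono hAE)
  have hPEkc : P (Ek d k)ᶜ = 0 := (prob_compl_eq_zero_iff (measurableSet_Ek k)).2 hPEk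
  set D : (Fin d → ℤ) × (Fin d → ℤ) → Set (Cfg d) := fun q =>
    {ω | (cluster ω q.1).Infinite ∧ (cluster ω q.2).Infinite ∧
      cluster ω q.1 ≠ cluster ω q.2} with hD
  have hcover : A ⊆ ⋃ q, (D q ∩ A) := by
    intro ω hω
    have h2 : 1 < (infClusters ω).ncard := by rw [hω.2]; omega
    obtain ⟨C1, C2, hC1, hC2, hC12⟩ := (Set.one_lt_ncard_iff hω.1).1 h2
    obtain ⟨x, rfl, hx⟩ := hC1
    obtain ⟨y, rfl, hy⟩ := hC2
    exact Set.mem_iUnion.2 ⟨(x, y), ⟨hx, hy, hC12⟩, hω⟩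
  have hpos : ∃ q, 0 < P (D q ∩ A) := by
    by_contra hcon
    push_neg at hcon
    have h0 : ∀ q, P (D q ∩ A) = 0 := fun q => le_antisymm (hcon q) (zero_le)
    have hA0 : P A = 0 :=
      le_antisymm (le_trans (measure_mono hcover) (le_of_eq (measure_iUnion_null h0)))
        (zero_le)
    rw [hconst] at hA0
    exact one_ne_zero hA0
  obtain ⟨⟨x, y⟩, hq⟩ := hpos
  have hDAne : (D (x, y) ∩ A).Nonempty := by
    rcases Set.eq_empty_or_nonempty (D (x, y) ∩ A) with he | hne
    · rw [he] at hq; simp at hq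
    · exact hne
  obtain ⟨ω₀, hω₀⟩ := hDAne
  have hxy : x ≠ y := fun hxyeq => hω₀.1.2.2 (by rw [hxyeq])
  obtain ⟨n, hs, hsμ, hx0, hyn, hint⟩ := (hirr x y).resolve_left hxy
  set S : Finset (HEdge d) := Finset.image hs Finset.univ with hS
  have hSμ : ∀ h ∈ S, 0 < μ h := by
    intro h hh
    obtain ⟨i, _, rfl⟩ := Finset.mem_image.1 hh
    exact hsμ i
  have hconnS : connRel (↑S : Set (HEdge d)) x y :=
    Or.inr ⟨n, hs, fun i => Finset.mem_coe.2 (Finset.mem_image_of_mem hs (Finset.mem_univ i)),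
      hx0, hyn, hint⟩
  set Fbad : Set (Cfg d) := (Ek d k)ᶜ with hFb
  have hFbadMeas : MeasurableSet Fbad := (measurableSet_Ek k).compl
  have hsubbad : D (x, y) ∩ A ⊆ forceOpen S ⁻¹' Fbad := by
    rintro ω ⟨⟨hcx, hcy, hcne⟩, hfin, hcard⟩
    obtain ⟨hfin2, hle⟩ := merge_lemma ω S x y hconnS hcx hcy hcne hfin
    simp only [Set.mem_preimage, hFb, Set.mem_compl_iff]
    intro hmem
    have hge := ncard_le_of_mem_Ek hmem hfin2
    omega
  set cylS := cylE S (fun _ => true) with hcylS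
  have hPcylS : P cylS = ∏ h ∈ S, ENNReal.ofReal (1 - (1 - u) ^ (μ h)) := by
    have h1 : P (cylE S (fun _ => true)) =
        ∏ h ∈ S, ENNReal.ofReal (if (fun _ : HEdge d => true) h then 1 - (1 - u) ^ (μ h)
          else (1 - u) ^ (μ h)) := hprod S (fun _ => true)
    simpa using h1
  have hcylSpos : 0 < P cylS := by
    rw [hPcylS, CanonicallyOrderedAdd.prod_pos]
    intro h hh
    have hμh := hSμ h hh
    have h1u : (1 - u : ℝ) ^ (μ h) < 1 :=
      Real.rpow_lt_one (by linarith) (by linarith) hμh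
    exact ENNReal.ofReal_pos.2 (by linarith)
  -- independence of the off-S σ-algebra and the cylinder on S
  set m1 : MeasurableSpace (Cfg d) := MeasurableSpace.generateFrom (offCyls S) with hm1
  set m2 : MeasurableSpace (Cfg d) :=
    MeasurableSpace.generateFrom ({cylS} : Set (Set (Cfg d))) with hm2
  have h1le : m1 ≤ (MeasurableSpace.pi : MeasurableSpace (Cfg d)) := by
    refine MeasurableSpace.generateFrom_le ?_
    rintro t ⟨F, c, hd, rfl⟩
    exact measurableSet_cylE F c
  have h2le : m2 ≤ (MeasurableSpace.pi : MeasurableSpace (Cfg d)) := by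
    refine MeasurableSpace.generateFrom_le ?_
    rintro t ht
    rw [Set.mem_singleton_iff] at ht
    subst ht
    exact measurableSet_cylE S _
  have hindepsets : ProbabilityTheory.IndepSets (offCyls S) {cylS} P := by
    rw [ProbabilityTheory.IndepSets_iff]
    rintro t1 t2 ⟨F, c, hd, rfl⟩ ht2
    rw [Set.mem_singleton_iff] at ht2
    subst ht2
    have hFnotS : ∀ h ∈ S, h ∉ F := fun h hh => Finset.disjoint_right.1 hd hh
    have hunion : cylE F c ∩ cylS =
        cylE (F ∪ S) (fun h => if h ∈ F then c h else true) := by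
      ext ω
      simp only [hcylS, cylE, Set.mem_inter_iff, Set.mem_setOf_eq, Finset.mem_union]
      constructor
      · rintro ⟨h1, h2⟩ h hh
        by_cases hF : h ∈ F
        · rw [if_pos hF]; exact h1 h hF
        · rw [if_neg hF]; exact h2 h (hh.resolve_left hF)
      · intro hall
        constructor
        · intro h hh
          have := hall h (Or.inl hh)
          rwa [if_pos hh] at this
        · intro h hh
          have := hall h (Or.inr hh)
          rwa [if_neg (hFnotS h hh)] at this
    have e1 : P (cylE F c) = ∏ h ∈ F,
        ENNReal.ofReal (if c h then 1 - (1 - u) ^ (μ h) else (1 - u) ^ (μ h)) := hprod F c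
    have e2 : P (cylE (F ∪ S) (fun h => if h ∈ F then c h else true)) =
        ∏ h ∈ F ∪ S, ENNReal.ofReal
          (if (if h ∈ F then c h else true) then 1 - (1 - u) ^ (μ h) else (1 - u) ^ (μ h)) :=
      hprod (F ∪ S) _
    rw [hunion, e2, Finset.prod_union hd, e1, hPcylS]
    congr 1
    · refine Finset.prod_congr rfl fun h hh => ?_
      rw [if_pos hh]
    · refine Finset.prod_congr rfl fun h hh => ?_
      rw [if_neg (hFnotS h hh)]
      simp
  have hindep : ProbabilityTheory.Indep m1 m2 P :=
    ProbabilityTheory.IndepSets.indep h1le h2le (isPiSystem_offCyls S)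
      (IsPiSystem.singleton cylS) hm1 hm2 hindepsets
  have hm1set : MeasurableSet[m1] (forceOpen S ⁻¹' Fbad) :=
    measurable_forceOpen_offCyls S hFbadMeas
  have hm2set : MeasurableSet[m2] cylS :=
    MeasurableSpace.measurableSet_generateFrom rfl
  have hkey : P (forceOpen S ⁻¹' Fbad ∩ cylS) = P (forceOpen S ⁻¹' Fbad) * P cylS :=
    (ProbabilityTheory.Indep_iff m1 m2 P).1 hindep _ _ hm1set hm2set
  have hTcyl : forceOpen S ⁻¹' Fbad ∩ cylS = Fbad ∩ cylS := by
    ext ω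
    simp only [Set.mem_inter_iff, Set.mem_preimage]
    have himp : ω ∈ cylS → forceOpen S ω = ω := by
      intro hω
      funext h
      simp only [forceOpen]
      split_ifs with hhS
      · exact (hω h hhS).symm
      · rfl
    constructor
    · rintro ⟨h1, h2⟩; rw [himp h2] at h1; exact ⟨h1, h2⟩
    · rintro ⟨h1, h2⟩; rw [himp h2]; exact ⟨h1, h2⟩
  have hlhs : P (forceOpen S ⁻¹' Fbad ∩ cylS) = 0 := by
    rw [hTcyl]
    refine le_antisymm ?_ (zero_le)
    calc P (Fbad ∩ cylS) ≤ P Fbad := measure_mono Set.inter_subset_left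
    _ = 0 := hPEkc
  have hrhs : 0 < P (forceOpen S ⁻¹' Fbad) * P cylS :=
    ENNReal.mul_pos (ne_of_gt (lt_of_lt_of_le hq (measure_mono hsubbad)))
      (ne_of_gt hcylSpos)
  rw [hkey] at hlhs
  rw [hlhs] at hrhs
  exact lt_irrefl 0 hrhs
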